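/- Let γ : ℂ → ℂ^m be a polynomial mapping with d := max_j deg γ_j ≥ 1, and let g : ℂ → ℂ be a polynomial with g = f ∘ γ for some function f defined on the image Γ = γ(ℂ). Suppose q > 0 is such that there exist c, R > 0 with |f(x)| ≥ c|x|^q for all x ∈ Γ with |x| ≥ R (maximum norms). Then q ≤ deg(g)/d. -/

import Mathlib

open Polynomial Filter

lemma aux_upper (p : Polynomial ℂ) :
    ∃ b : ℝ, 0 < b ∧ ∀ x : ℝ, 1 ≤ x → ‖p.eval (x : ℂ)‖ ≤ b * x ^ p.natDegree := by
  refine ⟨(∑ i ∈ Finset.range (p.natDegree + 1), ‖p.coeff i‖) + 1, by positivity, ?_⟩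
  intro x hx
  have hx0 : (0:ℝ) ≤ x := le_trans zero_le_one hx
  rw [Polynomial.eval_eq_sum_range]
  have hxn : (0:ℝ) ≤ x ^ p.natDegree := by positivity
  calc ‖∑ i ∈ Finset.range (p.natDegree + 1), p.coeff i * (x:ℂ) ^ i‖
      ≤ ∑ i ∈ Finset.range (p.natDegree + 1), ‖p.coeff i * (x:ℂ) ^ i‖ := norm_sum_le _ _
    _ ≤ ∑ i ∈ Finset.range (p.natDegree + 1), ‖p.coeff i‖ * x ^ p.natDegree := by
        apply Finset.sum_le_sum
        intro i hi
        rw [norm_mul, norm_pow, Complex.norm_real, Real.norm_of_nonneg hx0]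
        exact mul_le_mul_of_nonneg_left
          (pow_le_pow_right₀ hx (Nat.lt_succ_iff.mp (Finset.mem_range.mp hi)))
          (norm_nonneg _)
    _ ≤ _ := by
        rw [← Finset.sum_mul]
        nlinarith [hxn]

lemma aux_lower (p : Polynomial ℂ) (hp : 1 ≤ p.natDegree) :
    ∃ a : ℝ, 0 < a ∧ ∃ x0 : ℝ, 1 ≤ x0 ∧ ∀ x : ℝ, x0 ≤ x →
      a * x ^ p.natDegree ≤ ‖p.eval (x : ℂ)‖ := by
  have hp0 : p ≠ 0 := fun h => by simp [h] at hp
  set n := p.natDegree with hn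
  set L := ‖p.leadingCoeff‖ with hL
  have hLpos : 0 < L := norm_pos_iff.mpr (Polynomial.leadingCoeff_ne_zero.mpr hp0)
  obtain ⟨b, hb, hub⟩ := aux_upper p.eraseLead
  refine ⟨L / 2, by positivity, max 1 (2 * b / L), le_max_left _ _, ?_⟩
  intro x hx
  have hx1 : 1 ≤ x := le_trans (le_max_left _ _) hx
  have hx0 : (0:ℝ) < x := lt_of_lt_of_le one_pos hx1
  have hkey : p.leadingCoeff * (x:ℂ) ^ n = p.eval (x:ℂ) - p.eraseLead.eval (x:ℂ) := by
    have h0 := congrArg (Polynomial.eval (x:ℂ)) (Polynomial.eraseLead_add_C_mul_X_pow p)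
    simp only [Polynomial.eval_add, Polynomial.eval_mul, Polynomial.eval_C,
      Polynomial.eval_pow, Polynomial.eval_X] at h0
    rw [← hn] at h0
    rw [← h0]; ring
  have h1 : L * x ^ n ≤ ‖p.eval (x:ℂ)‖ + ‖p.eraseLead.eval (x:ℂ)‖ := by
    have := norm_sub_le (p.eval (x:ℂ)) (p.eraseLead.eval (x:ℂ))
    rw [← hkey] at this
    rw [norm_mul, norm_pow, Complex.norm_real, Real.norm_of_nonneg hx0.le] at this
    linarith
  have h2 : ‖p.eraseLead.eval (x:ℂ)‖ ≤ b * x ^ (n - 1) := by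
    calc ‖p.eraseLead.eval (x:ℂ)‖ ≤ b * x ^ p.eraseLead.natDegree := hub x hx1
      _ ≤ b * x ^ (n - 1) := by
          apply mul_le_mul_of_nonneg_left _ hb.le
          exact pow_le_pow_right₀ hx1 (Polynomial.eraseLead_natDegree_le p)
  have h3 : b * x ^ (n - 1) ≤ (L/2) * x ^ n := by
    have hxn : x ^ n = x * x ^ (n-1) := by
      rw [← pow_succ']
      congr 1
      omega
    have hxb : 2 * b / L ≤ x := le_trans (le_max_right _ _) hx
    have hbx : b ≤ L / 2 * x := by
      rw [div_le_iff₀ hLpos] at hxb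
      linarith
    have hpw : (0:ℝ) ≤ x ^ (n-1) := by positivity
    rw [hxn]
    nlinarith
  linarith

/-- Łojasiewicz exponent inequality on a polynomial curve: if
`γ : ℂ → ℂ^m` has `d = max_j deg γ_j ≥ 1`, `f` is a function on `Γ = γ(ℂ)` whose
pullback `g = f ∘ γ` is a polynomial, and `‖f x‖ ≥ c‖x‖^q` for `x ∈ Γ`, `‖x‖ ≥ R`
with `q, c, R > 0`, then `q ≤ deg(g)/d`. -/
theorem stmt_14 (m : ℕ) (γ : Fin m → Polynomial ℂ) (d : ℕ)
    (hd : d = Finset.univ.sup fun j => (γ j).natDegree) (hd1 : 1 ≤ d)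
    (f : (Fin m → ℂ) → ℂ) (g : Polynomial ℂ)
    (hg : ∀ t : ℂ, g.eval t = f (fun j => (γ j).eval t))
    (q : ℝ) (hq : 0 < q) (c R : ℝ) (hc : 0 < c) (hR : 0 < R)
    (hlow : ∀ x ∈ Set.range (fun t : ℂ => fun j => (γ j).eval t),
      R ≤ ‖x‖ → c * ‖x‖ ^ q ≤ ‖f x‖) :
    q ≤ (g.natDegree : ℝ) / d := by
  -- find j attaining the sup
  have hne : (Finset.univ : Finset (Fin m)).Nonempty := by
    rcases (Finset.univ : Finset (Fin m)).eq_empty_or_nonempty with h | h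
    · rw [h, Finset.sup_empty, Nat.bot_eq_zero] at hd
      omega
    · exact h
  obtain ⟨j, -, hj⟩ := Finset.exists_mem_eq_sup Finset.univ hne fun j => (γ j).natDegree
  rw [← hd] at hj
  obtain ⟨a, ha, x0, hx01, hlo⟩ := aux_lower (γ j) (hj ▸ hd1)
  obtain ⟨b, hb, hub⟩ := aux_upper g
  set n := g.natDegree with hn
  -- key estimate for large x
  have key : ∀ x : ℝ, max x0 (R / a) ≤ x →
      c * a ^ q * x ^ ((d : ℝ) * q) ≤ b * x ^ (n : ℝ) := by
    intro x hx
    have hx0' : x0 ≤ x := le_trans (le_max_left _ _) hx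
    have hx1 : 1 ≤ x := le_trans hx01 hx0'
    have hxpos : (0:ℝ) < x := lt_of_lt_of_le one_pos hx1
    set t : ℂ := (x : ℂ)
    set v : Fin m → ℂ := fun j => (γ j).eval t with hv
    have hlov : a * x ^ d ≤ ‖v‖ := by
      calc a * x ^ d = a * x ^ (γ j).natDegree := by rw [hj]
        _ ≤ ‖(γ j).eval t‖ := hlo x hx0'
        _ = ‖v j‖ := rfl
        _ ≤ ‖v‖ := norm_le_pi_norm v j
    have hxd : x ≤ x ^ d := le_self_pow₀ hx1 (by omega)
    have hRa : R / a ≤ x := le_trans (le_max_right _ _) hx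
    have hRv : R ≤ ‖v‖ := by
      rw [div_le_iff₀ ha] at hRa
      nlinarith
    have hmem : v ∈ Set.range (fun t : ℂ => fun j => (γ j).eval t) := ⟨t, rfl⟩
    have h1 : c * ‖v‖ ^ q ≤ ‖f v‖ := hlow v hmem hRv
    have h2 : ‖f v‖ = ‖g.eval t‖ := by rw [hg]
    have h3 : ‖g.eval t‖ ≤ b * x ^ n := hub x hx1
    have hvpos : (0:ℝ) ≤ a * x ^ d := by positivity
    have h4 : (a * x ^ d) ^ q ≤ ‖v‖ ^ q :=
      Real.rpow_le_rpow hvpos hlov hq.le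
    have h5 : (a * x ^ d) ^ q = a ^ q * x ^ ((d:ℝ) * q) := by
      rw [Real.mul_rpow ha.le (by positivity), ← Real.rpow_natCast x d,
        ← Real.rpow_mul hxpos.le]
    have h6 : b * (x:ℝ) ^ n = b * x ^ (n : ℝ) := by
      rw [Real.rpow_natCast]
    calc c * a ^ q * x ^ ((d:ℝ) * q) = c * ((a * x ^ d) ^ q) := by rw [h5]; ring
      _ ≤ c * ‖v‖ ^ q := by
          apply mul_le_mul_of_nonneg_left h4 hc.le
      _ ≤ ‖f v‖ := h1
      _ = ‖g.eval t‖ := h2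
      _ ≤ b * x ^ n := h3
      _ = b * x ^ (n : ℝ) := h6
  -- conclude by contradiction
  rw [le_div_iff₀ (by exact_mod_cast hd1 : (0:ℝ) < (d:ℕ))]
  by_contra hcon
  push_neg at hcon
  have he : (0:ℝ) < (d:ℝ) * q - n := by nlinarith
  have hbound : ∀ x : ℝ, max (max x0 (R/a)) 1 ≤ x →
      x ^ ((d:ℝ) * q - n) ≤ b / (c * a ^ q) := by
    intro x hx
    have hx1 : 1 ≤ x := le_trans (le_max_right _ _) hx
    have hxpos : (0:ℝ) < x := lt_of_lt_of_le one_pos hx1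
    have hk := key x (le_trans (le_max_left _ _) hx)
    have hsplit : x ^ ((d:ℝ) * q) = x ^ ((d:ℝ) * q - n) * x ^ (n:ℝ) := by
      rw [← Real.rpow_add hxpos]
      ring_nf
    rw [hsplit] at hk
    have hxn : (0:ℝ) < x ^ (n:ℝ) := Real.rpow_pos_of_pos hxpos _
    have hcq : (0:ℝ) < c * a ^ q := by positivity
    rw [le_div_iff₀ hcq]
    calc x ^ ((d:ℝ)*q - n) * (c * a ^ q)
        = (c * a ^ q * (x ^ ((d:ℝ)*q - n) * x ^ (n:ℝ))) / x ^ (n:ℝ) := by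
          field_simp
      _ ≤ (b * x ^ (n:ℝ)) / x ^ (n:ℝ) := by
          apply div_le_div_of_nonneg_right hk hxn.le |>.trans_eq rfl
      _ = b := by field_simp
  have htend := tendsto_rpow_atTop he
  have hev := htend.eventually_gt_atTop (b / (c * a ^ q))
  rw [Filter.eventually_atTop] at hev
  obtain ⟨M, hM⟩ := hev
  have h1 := hbound (max (max (max x0 (R/a)) 1) M) (le_max_left _ _)
  have h2 := hM (max (max (max x0 (R/a)) 1) M) (le_max_right _ _)
  exact absurd h1 (not_le.mpr h2)
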